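/- The vector (ζ⁴,ζ³) belongs to Λ, and the maps r(z,w) = (ζz, ζ²w) and s(z,w) = (−conj(z), −conj(w)) of ℂ² to itself satisfy r(Λ) = Λ and s(Λ) = Λ. -/

import Mathlib

noncomputable section

/-- The primitive fifth root of unity `ζ = exp(2πi/5)`. -/
def ζ : ℂ := Complex.exp (2 * Real.pi * Complex.I / 5)

/-- The lattice `Λ ⊆ ℂ²` generated by `(1,1)`, `(ζ,ζ²)`, `(ζ²,ζ⁴)`, `(ζ³,ζ)`. -/
def Λ : AddSubgroup (ℂ × ℂ) :=
  AddSubgroup.closure {((1 : ℂ), (1 : ℂ)), (ζ, ζ ^ 2), (ζ ^ 2, ζ ^ 4), (ζ ^ 3, ζ)}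

/-- The map `r(z,w) = (ζz, ζ²w)`. -/
def r (p : ℂ × ℂ) : ℂ × ℂ := (ζ * p.1, ζ ^ 2 * p.2)

/-- The map `s(z,w) = (−conj z, −conj w)`. -/
def s (p : ℂ × ℂ) : ℂ × ℂ := (-(starRingEnd ℂ) p.1, -(starRingEnd ℂ) p.2)

lemma hprim : IsPrimitiveRoot ζ 5 := by
  have := Complex.isPrimitiveRoot_exp 5 (by norm_num)
  convert this using 2
  simp [ζ]

lemma hz5 : ζ ^ 5 = 1 := hprim.pow_eq_one

lemma hsum : 1 + ζ + ζ ^ 2 + ζ ^ 3 + ζ ^ 4 = 0 := by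
  have hne : ζ - 1 ≠ 0 := sub_ne_zero.mpr (hprim.ne_one (by norm_num))
  have : (ζ - 1) * (1 + ζ + ζ ^ 2 + ζ ^ 3 + ζ ^ 4) = 0 := by
    linear_combination hz5
  exact (mul_eq_zero.mp this).resolve_left hne

lemma hconj : (starRingEnd ℂ) ζ = ζ ^ 4 := by
  have h1 : (starRingEnd ℂ) ζ * ζ = 1 := by
    rw [show (starRingEnd ℂ) ζ * ζ = Complex.normSq ζ by
      rw [Complex.normSq_eq_conj_mul_self]]
    norm_cast
    rw [Complex.normSq_eq_norm_sq]
    unfold ζ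
    rw [show (2 : ℂ) * Real.pi * Complex.I / 5 = (2 * Real.pi / 5 : ℝ) * Complex.I by
      push_cast; ring, Complex.norm_exp_ofReal_mul_I]
    norm_num
  have h2 : ζ ^ 4 * ζ = 1 := by linear_combination hz5
  have hzne : ζ ≠ 0 := fun h => by simp [h] at h2
  exact mul_right_cancel₀ hzne (h1.trans h2.symm)

lemma hg1 : ((1 : ℂ), (1 : ℂ)) ∈ Λ := AddSubgroup.subset_closure (by simp)
lemma hg2 : (ζ, ζ ^ 2) ∈ Λ := AddSubgroup.subset_closure (by simp)
lemma hg3 : (ζ ^ 2, ζ ^ 4) ∈ Λ := AddSubgroup.subset_closure (by simp)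
lemma hg4 : (ζ ^ 3, ζ) ∈ Λ := AddSubgroup.subset_closure (by simp)

lemma hg5 : (ζ ^ 4, ζ ^ 3) ∈ Λ := by
  have h : (ζ ^ 4, ζ ^ 3) =
      -(((1 : ℂ), (1 : ℂ)) + (ζ, ζ ^ 2) + (ζ ^ 2, ζ ^ 4) + (ζ ^ 3, ζ)) := by
    have h1 : ζ ^ 4 = -(1 + ζ + ζ ^ 2 + ζ ^ 3) := by linear_combination hsum
    have h2 : ζ ^ 3 = -(1 + ζ ^ 2 + ζ ^ 4 + ζ) := by linear_combination hsum
    rw [Prod.mk_add_mk, Prod.mk_add_mk, Prod.mk_add_mk, Prod.neg_mk, Prod.mk.injEq]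
    exact ⟨h1, h2⟩
  rw [h]
  exact neg_mem (add_mem (add_mem (add_mem hg1 hg2) hg3) hg4)

lemma r_mem : ∀ x ∈ Λ, r x ∈ Λ := by
  intro x hx
  induction hx using AddSubgroup.closure_induction with
  | mem g hg =>
    simp only [Set.mem_insert_iff, Set.mem_singleton_iff] at hg
    rcases hg with h | h | h | h <;> subst h <;> simp only [r]
    · simpa using hg2
    · have : (ζ * ζ, ζ ^ 2 * ζ ^ 2) = (ζ ^ 2, ζ ^ 4) := by
        simp [Prod.ext_iff]; constructor <;> ring
      rw [this]; exact hg3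
    · have : (ζ * ζ ^ 2, ζ ^ 2 * ζ ^ 4) = (ζ ^ 3, ζ) := by
        simp [Prod.ext_iff]
        constructor
        · ring
        · linear_combination ζ * hz5
      rw [this]; exact hg4
    · have : (ζ * ζ ^ 3, ζ ^ 2 * ζ) = (ζ ^ 4, ζ ^ 3) := by
        simp [Prod.ext_iff]; constructor <;> ring
      rw [this]; exact hg5
  | zero => simp [r]; exact zero_mem Λ
  | add a b _ _ ha hb =>
    have : r (a + b) = r a + r b := by simp [r, Prod.ext_iff]; constructor <;> ring
    rw [this]; exact add_mem ha hb
  | neg a _ ha =>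
    have : r (-a) = -(r a) := by simp [r]
    rw [this]; exact neg_mem ha

lemma s_mem : ∀ x ∈ Λ, s x ∈ Λ := by
  intro x hx
  induction hx using AddSubgroup.closure_induction with
  | mem g hg =>
    simp only [Set.mem_insert_iff, Set.mem_singleton_iff] at hg
    rcases hg with h | h | h | h <;> subst h <;> simp only [s]
    · have : ((-(starRingEnd ℂ) 1 : ℂ), (-(starRingEnd ℂ) 1 : ℂ)) =
          -(((1 : ℂ), (1 : ℂ))) := by simp only [map_one, Prod.neg_mk]
      rw [this]; exact neg_mem hg1
    · have : ((-(starRingEnd ℂ) ζ : ℂ), (-(starRingEnd ℂ) (ζ ^ 2) : ℂ)) =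
          -((ζ ^ 4, ζ ^ 3)) := by
        rw [Prod.neg_mk, Prod.mk.injEq, map_pow, hconj]
        refine ⟨rfl, by linear_combination -ζ ^ 3 * hz5⟩
      rw [this]; exact neg_mem hg5
    · have : ((-(starRingEnd ℂ) (ζ ^ 2) : ℂ), (-(starRingEnd ℂ) (ζ ^ 4) : ℂ)) =
          -((ζ ^ 3, ζ)) := by
        rw [Prod.neg_mk, Prod.mk.injEq, map_pow, map_pow, hconj]
        exact ⟨by linear_combination -ζ ^ 3 * hz5,
          by linear_combination (-ζ ^ 11 - ζ ^ 6 - ζ) * hz5⟩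
      rw [this]; exact neg_mem hg4
    · have : ((-(starRingEnd ℂ) (ζ ^ 3) : ℂ), (-(starRingEnd ℂ) ζ : ℂ)) =
          -((ζ ^ 2, ζ ^ 4)) := by
        rw [Prod.neg_mk, Prod.mk.injEq, map_pow, hconj]
        exact ⟨by linear_combination (-ζ ^ 7 - ζ ^ 2) * hz5, rfl⟩
      rw [this]; exact neg_mem hg3
  | zero => simp [s]; exact zero_mem Λ
  | add a b _ _ ha hb =>
    have : s (a + b) = s a + s b := by simp [s, Prod.ext_iff]; constructor <;> ring
    rw [this]; exact add_mem ha hb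
  | neg a _ ha =>
    have : s (-a) = -(s a) := by simp [s]
    rw [this]; exact neg_mem ha

/-- `(ζ⁴,ζ³) ∈ Λ`, and `r(Λ) = Λ`, `s(Λ) = Λ`. -/
theorem lattice_invariance :
    (ζ ^ 4, ζ ^ 3) ∈ Λ ∧ r '' (Λ : Set (ℂ × ℂ)) = (Λ : Set (ℂ × ℂ)) ∧
      s '' (Λ : Set (ℂ × ℂ)) = (Λ : Set (ℂ × ℂ)) := by
  refine ⟨hg5, ?_, ?_⟩
  · apply Set.eq_of_subset_of_subset
    · rintro x ⟨y, hy, rfl⟩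
      exact r_mem y hy
    · intro x hx
      refine ⟨r (r (r (r x))), r_mem _ (r_mem _ (r_mem _ (r_mem _ hx))), ?_⟩
      simp only [r, Prod.ext_iff]
      constructor
      · show ζ * (ζ * (ζ * (ζ * (ζ * x.1)))) = x.1
        linear_combination x.1 * hz5
      · show ζ ^ 2 * (ζ ^ 2 * (ζ ^ 2 * (ζ ^ 2 * (ζ ^ 2 * x.2)))) = x.2
        linear_combination (ζ ^ 5 + 1) * x.2 * hz5
  · apply Set.eq_of_subset_of_subset
    · rintro x ⟨y, hy, rfl⟩
      exact s_mem y hy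
    · intro x hx
      refine ⟨s x, s_mem x hx, ?_⟩
      simp [s, Prod.ext_iff]

end
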